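/- arXiv:1602.02661 — 2 statements merged into one kernel-verified Lean document; each statement's English description precedes it below -/
import Mathlib

section
/- Let H be a quaternionic Hilbert space, J ∈ B(H) an anti self-adjoint unitary operator, and ι an imaginary unit of ℍ. Then every bounded ℂ_ι-linear operator T on the complex subspace H₊ := {u ∈ H : Ju = uι} admits a unique bounded right ℍ-linear extension T̃ ∈ B(H); moreover ‖T̃‖ = ‖T‖, J T̃ = T̃ J, (T̃)* = (T*)~, (ST)~ = S̃ T̃ for S ∈ B(H₊), and T̃ ≥ 0 whenever T ≥ 0. -/
noncomputable section

notation "ℍ" => Quaternion ℝ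

open MeasureTheory Filter

/-- Borel σ-algebra on the quaternions. -/
instance : MeasurableSpace ℍ := borel ℍ

instance : BorelSpace ℍ := ⟨rfl⟩

/-- A quaternionic (right) Hilbert space structure on a normed additive group `H`:
a right scalar multiplication by quaternions together with an ℍ-valued Hermitian
scalar product compatible with the norm.  (Completeness of `H` is assumed
separately via `[CompleteSpace H]`.) -/
structure QHS (H : Type) [NormedAddCommGroup H] where
  smul : H → ℍ → H
  inn : H → H → ℍ
  add_smul' : ∀ (u v : H) (q : ℍ), smul (u + v) q = smul u q + smul v q
  smul_add' : ∀ (u : H) (p q : ℍ), smul u (p + q) = smul u p + smul u q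
  smul_mul' : ∀ (u : H) (p q : ℍ), smul u (p * q) = smul (smul u p) q
  smul_one' : ∀ u : H, smul u 1 = u
  inn_add_right : ∀ u v w : H, inn u (v + w) = inn u v + inn u w
  inn_smul_right : ∀ (u v : H) (q : ℍ), inn u (smul v q) = inn u v * q
  inn_conj : ∀ u v : H, inn u v = star (inn v u)
  inn_self_real : ∀ u : H, inn u u = (((inn u u).re : ℝ) : ℍ)
  norm_sq' : ∀ u : H, ‖u‖ ^ 2 = (inn u u).re

variable {H : Type} [NormedAddCommGroup H]

/-- The graph of an operator `T` with domain `D`. -/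
def graphOf (T : H → H) (D : Set H) : Set (H × H) := {p | p.1 ∈ D ∧ p.2 = T p.1}

/-- Domain of a graph. -/
def graphDom (G : Set (H × H)) : Set H := {u | ∃ w, (u, w) ∈ G}

/-- A function extracted from a graph (by choice). -/
def graphFun (G : Set (H × H)) : H → H := fun u =>
  letI : Nonempty H := ⟨0⟩
  Classical.epsilon fun w => (u, w) ∈ G

/-- Boundedness of an everywhere defined operator. -/
def BoundedOp (T : H → H) : Prop := ∃ C : ℝ, ∀ u : H, ‖T u‖ ≤ C * ‖u‖

/-- The operator norm. -/
def opNorm (T : H → H) : ℝ := sInf {C : ℝ | 0 ≤ C ∧ ∀ u : H, ‖T u‖ ≤ C * ‖u‖}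

/-- Closed operator: the graph is closed. -/
def ClosedOp (T : H → H) (D : Set H) : Prop := IsClosed (graphOf T D)

/-- The domain `D(T²)`. -/
def D2 (T : H → H) (D : Set H) : Set H := {u ∈ D | T u ∈ D}

/-- The slice complex plane `ℂ_ι = {a + ι b}` determined by an imaginary unit `ι`. -/
def Cslice (ι : ℍ) : Set ℍ :=
  {x : ℍ | ∃ a b : ℝ, x = ((a : ℝ) : ℍ) + ι * ((b : ℝ) : ℍ)}

/-- The closed upper half slice plane `ℂ_ι⁺ = {a + ι b : b ≥ 0}`. -/
def Cplus (ι : ℍ) : Set ℍ :=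
  {x : ℍ | ∃ a b : ℝ, 0 ≤ b ∧ x = ((a : ℝ) : ℍ) + ι * ((b : ℝ) : ℍ)}

namespace QHS

variable (𝒮 : QHS H)

/-- Right ℍ-linearity of an everywhere defined map. -/
def RightLinear (T : H → H) : Prop :=
  (∀ u v : H, T (u + v) = T u + T v) ∧ ∀ (u : H) (q : ℍ), T (𝒮.smul u q) = 𝒮.smul (T u) q

/-- A (right ℍ-linear) subspace. -/
def IsSubspace (D : Set H) : Prop :=
  (0 : H) ∈ D ∧ (∀ u ∈ D, ∀ v ∈ D, u + v ∈ D) ∧ ∀ u ∈ D, ∀ q : ℍ, 𝒮.smul u q ∈ D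

/-- Right ℍ-linearity on a domain `D`. -/
def RightLinearOn (T : H → H) (D : Set H) : Prop :=
  (∀ u ∈ D, ∀ v ∈ D, T (u + v) = T u + T v) ∧
    ∀ u ∈ D, ∀ q : ℍ, T (𝒮.smul u q) = 𝒮.smul (T u) q

/-- `S` is the adjoint of `T` (both everywhere defined):  `⟨S u|v⟩ = ⟨u|T v⟩`. -/
def AdjointPair (T S : H → H) : Prop := ∀ u v : H, 𝒮.inn (S u) v = 𝒮.inn u (T v)

def SelfAdjointOp (T : H → H) : Prop := ∀ u v : H, 𝒮.inn (T u) v = 𝒮.inn u (T v)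

def AntiSelfAdjointOp (T : H → H) : Prop := ∀ u v : H, 𝒮.inn (T u) v = -𝒮.inn u (T v)

/-- Positivity: `⟨u|T u⟩` is real and non-negative. -/
def PositiveOp (T : H → H) : Prop :=
  ∀ u : H, 𝒮.inn u (T u) = ((((𝒮.inn u (T u)).re : ℝ)) : ℍ) ∧ 0 ≤ (𝒮.inn u (T u)).re

/-- Positivity on a domain. -/
def PositiveOn (T : H → H) (D : Set H) : Prop :=
  ∀ u ∈ D, 𝒮.inn u (T u) = ((((𝒮.inn u (T u)).re : ℝ)) : ℍ) ∧ 0 ≤ (𝒮.inn u (T u)).re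

/-- Unitarity: right linear, surjective, inner-product preserving. -/
def UnitaryOp (T : H → H) : Prop :=
  𝒮.RightLinear T ∧ Function.Surjective T ∧ ∀ u v : H, 𝒮.inn (T u) (T v) = 𝒮.inn u v

/-- The domain of the adjoint of `T : D → H`. -/
def adjDom (T : H → H) (D : Set H) : Set H :=
  {u : H | ∃ w : H, ∀ v ∈ D, 𝒮.inn w v = 𝒮.inn u (T v)}

/-- The adjoint operator of `T : D → H` (defined by choice; it is the genuine
adjoint when `D` is dense). -/
def adjOp (T : H → H) (D : Set H) : H → H := fun u =>
  letI := Classical.propDecidable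
  if h : ∃ w : H, ∀ v ∈ D, 𝒮.inn w v = 𝒮.inn u (T v) then h.choose else 0

/-- Self-adjointness of an unbounded operator: `T* = T` (same domain, same values). -/
def SelfAdjointUnb (T : H → H) (D : Set H) : Prop :=
  𝒮.adjDom T D = D ∧ ∀ u ∈ D, 𝒮.adjOp T D u = T u

/-- Normality of an unbounded operator: `T T* = T* T`. -/
def NormalUnb (T : H → H) (D : Set H) : Prop :=
  ({u ∈ D | T u ∈ 𝒮.adjDom T D} = {u ∈ 𝒮.adjDom T D | 𝒮.adjOp T D u ∈ D}) ∧
    ∀ u ∈ D, T u ∈ 𝒮.adjDom T D → 𝒮.adjOp T D (T u) = T (𝒮.adjOp T D u)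

/-- The positive square root of a positive bounded operator (by choice). -/
def posSqrt (T : H → H) : H → H :=
  letI : Nonempty (H → H) := ⟨id⟩
  Classical.epsilon fun R : H → H =>
    𝒮.RightLinear R ∧ BoundedOp R ∧ 𝒮.PositiveOp R ∧ 𝒮.SelfAdjointOp R ∧
      ∀ u : H, R (R u) = T u

/-- The operator `Δ_q(T) = T² - T (2 Re q) + |q|² 1`. -/
def Delta (T : H → H) (q : ℍ) : H → H := fun u =>
  T (T u) - 𝒮.smul (T u) (((2 * q.re : ℝ)) : ℍ) + 𝒮.smul u (((‖q‖ ^ 2 : ℝ)) : ℍ)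

/-- Membership in the spherical resolvent set: `Δ_q(T)` is injective with dense range
and bounded inverse. -/
def InSphResolvent (T : H → H) (D : Set H) (q : ℍ) : Prop :=
  (∀ u ∈ D2 T D, 𝒮.Delta T q u = 0 → u = 0) ∧
    Dense (𝒮.Delta T q '' D2 T D) ∧
    ∃ C : ℝ, ∀ u ∈ D2 T D, ‖u‖ ≤ C * ‖𝒮.Delta T q u‖

/-- The spherical spectrum. -/
def sphSpectrum (T : H → H) (D : Set H) : Set ℍ := {q | ¬𝒮.InSphResolvent T D q}

/-- The spherical point spectrum. -/
def sphPointSpectrum (T : H → H) (D : Set H) : Set ℍ :=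
  {q | ∃ u ∈ D2 T D, u ≠ 0 ∧ 𝒮.Delta T q u = 0}

/-- The spherical residual spectrum. -/
def sphResidualSpectrum (T : H → H) (D : Set H) : Set ℍ :=
  {q | (∀ u ∈ D2 T D, 𝒮.Delta T q u = 0 → u = 0) ∧
    ¬Dense (𝒮.Delta T q '' D2 T D)}

/-- The spherical continuous spectrum. -/
def sphContinuousSpectrum (T : H → H) (D : Set H) : Set ℍ :=
  {q | (∀ u ∈ D2 T D, 𝒮.Delta T q u = 0 → u = 0) ∧
    Dense (𝒮.Delta T q '' D2 T D) ∧
    ¬∃ C : ℝ, ∀ u ∈ D2 T D, ‖u‖ ≤ C * ‖𝒮.Delta T q u‖}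

/-- A Hilbert basis of a quaternionic Hilbert space. -/
def IsHilbertBasis (N : Set H) : Prop :=
  (∀ z ∈ N, ‖z‖ = 1) ∧ (∀ z ∈ N, ∀ w ∈ N, z ≠ w → 𝒮.inn z w = 0) ∧
    ∀ u : H, (∀ z ∈ N, 𝒮.inn z u = 0) → u = 0

/-- `L` is the left scalar multiplication induced by the Hilbert basis `N`:
`L_q u = Σ_{z ∈ N} z q ⟨z|u⟩`. -/
def IsInducedLSM (N : Set H) (L : ℍ → H → H) : Prop :=
  ∀ (q : ℍ) (u : H),
    HasSum (fun z : N => 𝒮.smul (z : H) (q * 𝒮.inn (z : H) u)) (L q u)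

/-- `L` is a left scalar multiplication of `H` (induced by some Hilbert basis). -/
def IsLSM (L : ℍ → H → H) : Prop :=
  ∃ N : Set H, 𝒮.IsHilbertBasis N ∧ 𝒮.IsInducedLSM N L

/-- The orthogonal complement of a subset. -/
def orthC (S : Set H) : Set H := {u : H | ∀ v ∈ S, 𝒮.inn u v = 0}

/-- The complex subspace `H₊^{Jι} = {u : J u = u ι}`. -/
def Hplus (J : H → H) (ι : ℍ) : Set H := {u : H | J u = 𝒮.smul u ι}

/-- The complex subspace `H₋^{Jι} = {u : J u = -u ι}`. -/
def Hminus (J : H → H) (ι : ℍ) : Set H := {u : H | J u = -𝒮.smul u ι}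

end QHS

/-- A quaternionic projection valued measure (qPVM) over `ℂ_ι⁺` in `H`. -/
structure IsQPVM (𝒮 : QHS H) (ι : ℍ) (P : Set ℍ → H → H) : Prop where
  proj_linear : ∀ E : Set ℍ, MeasurableSet E → E ⊆ Cplus ι → 𝒮.RightLinear (P E)
  proj_bounded : ∀ E : Set ℍ, MeasurableSet E → E ⊆ Cplus ι → BoundedOp (P E)
  proj_idem : ∀ E : Set ℍ, MeasurableSet E → E ⊆ Cplus ι → ∀ u, P E (P E u) = P E u
  proj_sa : ∀ E : Set ℍ, MeasurableSet E → E ⊆ Cplus ι → 𝒮.SelfAdjointOp (P E)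
  proj_pos : ∀ E : Set ℍ, MeasurableSet E → E ⊆ Cplus ι → 𝒮.PositiveOp (P E)
  total : ∀ u : H, P (Cplus ι) u = u
  inter : ∀ E F : Set ℍ, MeasurableSet E → E ⊆ Cplus ι → MeasurableSet F → F ⊆ Cplus ι →
    ∀ u, P (E ∩ F) u = P E (P F u)
  sigma_add : ∀ E : ℕ → Set ℍ, (∀ n, MeasurableSet (E n) ∧ E n ⊆ Cplus ι) →
    (Pairwise fun n m => Disjoint (E n) (E m)) →
    ∀ u : H, HasSum (fun n => P (E n) u) (P (⋃ n, E n) u)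

/-- The support of a qPVM: points of `ℂ_ι⁺` all of whose relatively open neighbourhoods
have non-zero projection. -/
def suppP (ι : ℍ) (P : Set ℍ → H → H) : Set ℍ :=
  {x ∈ Cplus ι | ∀ U : Set ℍ, IsOpen U → x ∈ U → ∃ u : H, P (U ∩ Cplus ι) u ≠ 0}

/-- An intertwining quaternionic PVM (iqPVM): a qPVM together with a commuting left
scalar multiplication. -/
def IsIQPVM (𝒮 : QHS H) (ι : ℍ) (P : Set ℍ → H → H) (L : ℍ → H → H) : Prop :=
  IsQPVM 𝒮 ι P ∧ 𝒮.IsLSM L ∧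
    ∀ E : Set ℍ, MeasurableSet E → E ⊆ Cplus ι →
      ∀ (q : ℍ) (u : H), P E (L q u) = L q (P E u)

/-- Data of a simple function: coefficients and pairwise disjoint Borel subsets of `ℂ_ι⁺`. -/
def IsSimpleData (ι : ℍ) {n : ℕ} (c : Fin n → ℍ) (E : Fin n → Set ℍ) : Prop :=
  (∀ ℓ, MeasurableSet (E ℓ) ∧ E ℓ ⊆ Cplus ι) ∧
    Pairwise fun ℓ ℓ' => Disjoint (E ℓ) (E ℓ')

/-- `S = ∫ φ d𝒫`, characterized by uniform approximation (on the support of `P`)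
by simple functions together with approximation of `S` by the corresponding
elementary integrals `Σ_ℓ L_{c_ℓ} P(E_ℓ)`. -/
def IsBoundedIntegral (𝒮 : QHS H) (ι : ℍ) (P : Set ℍ → H → H) (L : ℍ → H → H)
    (φ : ℍ → ℍ) (S : H → H) : Prop :=
  ∀ ε : ℝ, 0 < ε → ∃ (n : ℕ) (c : Fin n → ℍ) (E : Fin n → Set ℍ),
    IsSimpleData ι c E ∧
    (∀ x ∈ suppP ι P, ‖φ x - ∑ ℓ, Set.indicator (E ℓ) (fun _ => c ℓ) x‖ ≤ ε) ∧
    ∀ u : H, ‖S u - ∑ ℓ, L (c ℓ) (P (E ℓ) u)‖ ≤ ε * ‖u‖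

/-- The integral of a bounded measurable function with respect to an iqPVM
(defined by choice from the characterizing property). -/
def bInt (𝒮 : QHS H) (ι : ℍ) (P : Set ℍ → H → H) (L : ℍ → H → H) (φ : ℍ → ℍ) : H → H :=
  letI : Nonempty (H → H) := ⟨id⟩
  Classical.epsilon fun S : H → H => IsBoundedIntegral 𝒮 ι P L φ S

/-- The `P`-essential supremum norm `‖φ‖_∞^{(P)}`. -/
def essSupNorm (ι : ℍ) (P : Set ℍ → H → H) (φ : ℍ → ℍ) : ℝ :=
  sInf {k : ℝ | 0 ≤ k ∧ ∀ u : H, P {x ∈ Cplus ι | k < ‖φ x‖} u = 0}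

/-- `μ` is the positive Borel measure `μ_u^{(P)} : E ↦ ⟨u|P(E)u⟩`. -/
def muMatches (𝒮 : QHS H) (ι : ℍ) (P : Set ℍ → H → H) (u : H) (μ : Measure ℍ) : Prop :=
  ∀ E : Set ℍ, MeasurableSet E →
    μ E = ENNReal.ofReal ((𝒮.inn u (P (E ∩ Cplus ι) u)).re)

/-- The natural domain `D_f = {u : f ∈ L²(μ_u^{(P)})}` of `∫ f d𝒫`. -/
def Dnat (𝒮 : QHS H) (ι : ℍ) (P : Set ℍ → H → H) (f : ℍ → ℍ) : Set H :=
  {u : H | ∃ μ : Measure ℍ, muMatches 𝒮 ι P u μ ∧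
    (∫⁻ x, ENNReal.ofReal (‖f x‖ ^ 2) ∂μ) < ⊤}

/-- The truncation of `f` at level `n`. -/
def trunc (f : ℍ → ℍ) (n : ℕ) : ℍ → ℍ := fun x => if ‖f x‖ ≤ (n : ℝ) then f x else 0

/-- The integral of a possibly unbounded measurable function with respect to an iqPVM:
the strong limit of the integrals of its truncations. -/
def uInt (𝒮 : QHS H) (ι : ℍ) (P : Set ℍ → H → H) (L : ℍ → H → H) (f : ℍ → ℍ) : H → H :=
  fun u =>
    letI : Nonempty H := ⟨0⟩
    limUnder atTop fun n : ℕ => bInt 𝒮 ι P L (trunc f n) u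

/-- The inverse `(1 + T*T)⁻¹` of `1 + T*T` (by choice). -/
def CT (𝒮 : QHS H) (T : H → H) (D : Set H) : H → H :=
  letI : Nonempty (H → H) := ⟨id⟩
  Classical.epsilon fun C : H → H =>
    (∀ y : H, C y ∈ D ∧ T (C y) ∈ 𝒮.adjDom T D ∧ C y + 𝒮.adjOp T D (T (C y)) = y) ∧
      ∀ u ∈ D, T u ∈ 𝒮.adjDom T D → C (u + 𝒮.adjOp T D (T u)) = u

/-- The bounded transform `Z_T = T (1 + T*T)^{-1/2}`. -/
def ZT (𝒮 : QHS H) (T : H → H) (D : Set H) : H → H := fun u =>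
  T (𝒮.posSqrt (CT 𝒮 T D) u)

end

set_option maxRecDepth 8000

section AuxExt
set_option maxRecDepth 8000

lemma qre_mul_comm (a b : ℍ) : (a*b).re = (b*a).re := by
  simp [Quaternion.re_mul]; ring

lemma qsq_neg_one {q : ℍ} (h : q * q = -1) :
    q.re = 0 ∧ q.imI^2 + q.imJ^2 + q.imK^2 = 1 := by
  have h0 : (q*q).re = (-1 : ℍ).re := by rw [h]
  have h1 : (q*q).imI = (-1 : ℍ).imI := by rw [h]
  have h2 : (q*q).imJ = (-1 : ℍ).imJ := by rw [h]
  have h3 : (q*q).imK = (-1 : ℍ).imK := by rw [h]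
  simp [Quaternion.re_mul, Quaternion.imI_mul, Quaternion.imJ_mul, Quaternion.imK_mul, Quaternion.re_one, Quaternion.imI_one, Quaternion.imJ_one, Quaternion.imK_one] at h0 h1 h2 h3
  rcases eq_or_ne q.re 0 with hr | hr
  · refine ⟨hr, ?_⟩; rw [hr] at h0; nlinarith
  · exfalso
    have hi : q.imI = 0 := by
      have : q.re * q.imI = 0 := by linarith
      exact (mul_eq_zero.mp this).resolve_left hr
    have hj : q.imJ = 0 := by
      have : q.re * q.imJ = 0 := by linarith
      exact (mul_eq_zero.mp this).resolve_left hr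
    have hk : q.imK = 0 := by
      have : q.re * q.imK = 0 := by linarith
      exact (mul_eq_zero.mp this).resolve_left hr
    rw [hi, hj, hk] at h0
    nlinarith [sq_nonneg q.re]

/-- pure imaginary quaternions with zero dot product anticommute -/
lemma qanticomm {p q : ℍ} (hp : p.re = 0) (hq : q.re = 0)
    (hdot : p.imI*q.imI + p.imJ*q.imJ + p.imK*q.imK = 0) : p * q = -(q * p) := by
  ext <;>
    simp [Quaternion.re_mul, Quaternion.imI_mul, Quaternion.imJ_mul, Quaternion.imK_mul, hp, hq] <;>
    linarith

/-- pure imaginary unit quaternions square to -1 -/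
lemma qsq_eq_neg_one {q : ℍ} (hq : q.re = 0) (hn : q.imI^2 + q.imJ^2 + q.imK^2 = 1) :
    q * q = -1 := by
  ext <;>
    simp [Quaternion.re_mul, Quaternion.imI_mul, Quaternion.imJ_mul, Quaternion.imK_mul, hq, Quaternion.re_one, Quaternion.imI_one, Quaternion.imJ_one, Quaternion.imK_one] <;>
    nlinarith

lemma exists_anticomm {ι : ℍ} (hι : ι * ι = -1) :
    ∃ j : ℍ, j * j = -1 ∧ ι * j = -(j * ι) := by
  obtain ⟨hre, hn⟩ := qsq_neg_one hι
  rcases eq_or_ne (ι.imI^2 + ι.imJ^2) 0 with h0 | h0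
  · -- ι = ± k ; take j = i
    refine ⟨⟨0,1,0,0⟩, ?_, ?_⟩
    · apply qsq_eq_neg_one <;> simp
    · apply qanticomm hre (by simp)
      have : ι.imI = 0 := by nlinarith [sq_nonneg ι.imI, sq_nonneg ι.imJ]
      simp [this]
  · set s : ℝ := Real.sqrt (ι.imI^2 + ι.imJ^2) with hs
    have hpos : 0 < ι.imI^2 + ι.imJ^2 := lt_of_le_of_ne (by positivity) (Ne.symm h0)
    have hs2 : s^2 = ι.imI^2 + ι.imJ^2 := Real.sq_sqrt hpos.le
    have hsne : s ≠ 0 := by positivity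
    refine ⟨⟨0, -ι.imJ/s, ι.imI/s, 0⟩, ?_, ?_⟩
    · apply qsq_eq_neg_one (by simp)
      field_simp
      nlinarith
    · apply qanticomm hre (by simp)
      field_simp; ring

section Dec
variable {ι j : ℍ} (hι : ι * ι = -1) (hj : j * j = -1) (ha : ι * j = -(j * ι))

include hι hj ha

lemma hji' : j * ι = -(ι * j) := by rw [ha, neg_neg]

lemma hk' : (ι*j) * (ι*j) = -1 := by
  have : (ι*j) * (ι*j) = ι*(j*ι)*j := by noncomm_ring
  rw [this, hji' hι hj ha]
  have : ι * -(ι*j) * j = -(ι*ι*(j*j)) := by noncomm_ring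
  rw [this, hι, hj]; norm_num

lemma p1' : ι * (ι*j) = -j := by rw [← mul_assoc, hι]; noncomm_ring

lemma p3' : j * (ι*j) = ι := by
  have : j * (ι*j) = (j*ι)*j := by noncomm_ring
  rw [this, hji' hι hj ha]
  have : -(ι*j)*j = -(ι*(j*j)) := by noncomm_ring
  rw [this, hj]; noncomm_ring

lemma p4' : (ι*j) * ι = j := by
  have : (ι*j)*ι = ι*(j*ι) := by noncomm_ring
  rw [this, hji' hι hj ha, mul_neg, p1' hι hj ha, neg_neg]

lemma p5' : (ι*j) * j = -ι := by
  rw [mul_assoc, hj]; noncomm_ring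

lemma coords_zero (a b c d : ℝ)
    (h : (a:ℍ) + (b:ℍ)*ι + (c:ℍ)*j + (d:ℍ)*(ι*j) = 0) :
    a = 0 ∧ b = 0 ∧ c = 0 ∧ d = 0 := by
  obtain ⟨rι, _⟩ := qsq_neg_one hι
  obtain ⟨rj, _⟩ := qsq_neg_one hj
  obtain ⟨rk, _⟩ := qsq_neg_one (hk' hι hj ha)
  rw [Quaternion.coe_mul_eq_smul, Quaternion.coe_mul_eq_smul, Quaternion.coe_mul_eq_smul] at h
  have h0 := congrArg QuaternionAlgebra.re h
  simp [Quaternion.re_smul, rι, rj, rk, Quaternion.re_one, Quaternion.re_zero] at h0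
  have h1 := congrArg (fun x => (-ι * x).re) h
  simp only [mul_add, neg_mul, mul_smul_comm, hι, p1' hι hj ha, mul_one] at h1
  simp [Quaternion.re_smul, rι, rj, rk, Quaternion.re_one, Quaternion.re_zero] at h1
  have h2 := congrArg (fun x => (-j * x).re) h
  simp only [mul_add, neg_mul, mul_smul_comm, hj, hji' hι hj ha, p3' hι hj ha, mul_one] at h2
  simp [Quaternion.re_smul, rι, rj, rk, Quaternion.re_one, Quaternion.re_zero] at h2
  have h3 := congrArg (fun x => (-(ι*j) * x).re) h
  simp only [mul_add, neg_mul, mul_smul_comm, hk' hι hj ha, p4' hι hj ha, p5' hι hj ha, mul_one] at h3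
  simp [Quaternion.re_smul, rι, rj, rk, Quaternion.re_one, Quaternion.re_zero] at h3
  exact ⟨h0, h1, h2, h3⟩

end Dec

section Dec2
set_option linter.unusedSectionVars false
variable {ι j : ℍ} (hι : ι * ι = -1) (hj : j * j = -1) (ha : ι * j = -(j * ι))
include hι hj ha

lemma qdecomp (q : ℍ) :
    ∃ a b c d : ℝ, q = (a:ℍ) + (b:ℍ)*ι + (c:ℍ)*j + (d:ℍ)*(ι*j) := by
  set f : ℍ → ℍ := fun x => (x.re:ℍ) + (x.imI:ℍ)*ι + (x.imJ:ℍ)*j + (x.imK:ℍ)*(ι*j) with hf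
  have hadd : ∀ x y : ℍ, f (x + y) = f x + f y := by
    intro x y
    simp only [hf, Quaternion.re_add, Quaternion.imI_add, Quaternion.imJ_add,
      Quaternion.imK_add, Quaternion.coe_add, add_mul]
    abel
  have hsmul : ∀ (r : ℝ) (x : ℍ), f (r • x) = r • f x := by
    intro r x
    conv_rhs => rw [← Quaternion.coe_mul_eq_smul]
    simp only [hf, Quaternion.re_smul, Quaternion.imI_smul, Quaternion.imJ_smul,
      Quaternion.imK_smul, smul_eq_mul, Quaternion.coe_mul, mul_add, mul_assoc]
  let φ : ℍ →ₗ[ℝ] ℍ := { toFun := f, map_add' := hadd, map_smul' := hsmul }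
  have hinj : Function.Injective φ := by
    rw [injective_iff_map_eq_zero]
    intro x hx
    obtain ⟨h0, h1, h2, h3⟩ := coords_zero hι hj ha _ _ _ _ hx
    ext <;> assumption
  obtain ⟨x, hx⟩ := LinearMap.injective_iff_surjective.mp hinj q
  exact ⟨x.re, x.imI, x.imJ, x.imK, hx.symm⟩

end Dec2

lemma real_eq_of_sq_eq {a b : ℝ} (ha : 0 ≤ a) (hb : 0 ≤ b) (h : a^2 = b^2) : a = b := by
  nlinarith [sq_nonneg (a-b), sq_nonneg (a+b)]

lemma real_le_of_sq_le {a b : ℝ} (ha : 0 ≤ a) (hb : 0 ≤ b) (h : a^2 ≤ b^2) : a ≤ b := by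
  nlinarith [sq_nonneg (a-b), sq_nonneg (a+b)]

lemma sq_le_sq_mul {a b c : ℝ} (ha : 0 ≤ a) (hc : 0 ≤ c) (h : a ≤ c * b) :
    a ^ 2 ≤ c ^ 2 * b ^ 2 := by nlinarith

namespace QHS
variable {H : Type} [NormedAddCommGroup H] (𝒮 : QHS H)

lemma zero_smul'' (q : ℍ) : 𝒮.smul 0 q = 0 := by
  have h := 𝒮.add_smul' 0 0 q
  rw [add_zero] at h
  exact (left_eq_add.mp h)

lemma smul_zero'' (u : H) : 𝒮.smul u 0 = 0 := by
  have h := 𝒮.smul_add' u 0 0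
  rw [add_zero] at h
  exact (left_eq_add.mp h)

lemma neg_smul'' (u : H) (q : ℍ) : 𝒮.smul (-u) q = -𝒮.smul u q := by
  have h := 𝒮.add_smul' u (-u) q
  rw [add_neg_cancel, 𝒮.zero_smul''] at h
  exact (neg_eq_of_add_eq_zero_right h.symm).symm

lemma smul_neg'' (u : H) (q : ℍ) : 𝒮.smul u (-q) = -𝒮.smul u q := by
  have h := 𝒮.smul_add' u q (-q)
  rw [add_neg_cancel, 𝒮.smul_zero''] at h
  exact (neg_eq_of_add_eq_zero_right h.symm).symm

lemma sub_smul'' (u v : H) (q : ℍ) : 𝒮.smul (u - v) q = 𝒮.smul u q - 𝒮.smul v q := by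
  rw [sub_eq_add_neg, 𝒮.add_smul', 𝒮.neg_smul'', sub_eq_add_neg]

lemma smul_sub'' (u : H) (p q : ℍ) : 𝒮.smul u (p - q) = 𝒮.smul u p - 𝒮.smul u q := by
  rw [sub_eq_add_neg, 𝒮.smul_add', 𝒮.smul_neg'', sub_eq_add_neg]

lemma inn_add_left' (u v w : H) : 𝒮.inn (u + v) w = 𝒮.inn u w + 𝒮.inn v w := by
  rw [𝒮.inn_conj (u+v) w, 𝒮.inn_add_right, star_add, ← 𝒮.inn_conj, ← 𝒮.inn_conj]

lemma inn_smul_left' (u v : H) (q : ℍ) : 𝒮.inn (𝒮.smul u q) v = star q * 𝒮.inn u v := by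
  rw [𝒮.inn_conj (𝒮.smul u q) v, 𝒮.inn_smul_right, star_mul, ← 𝒮.inn_conj]

lemma inn_zero_left (v : H) : 𝒮.inn 0 v = 0 := by
  have h := 𝒮.inn_add_left' 0 0 v
  rw [add_zero] at h
  exact (left_eq_add.mp h)

lemma inn_zero_right (v : H) : 𝒮.inn v 0 = 0 := by
  have h := 𝒮.inn_add_right v 0 0
  rw [add_zero] at h
  exact (left_eq_add.mp h)

lemma inn_neg_left (u v : H) : 𝒮.inn (-u) v = -𝒮.inn u v := by
  have h := 𝒮.inn_add_left' u (-u) v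
  rw [add_neg_cancel, 𝒮.inn_zero_left] at h
  exact (neg_eq_of_add_eq_zero_right h.symm).symm

lemma inn_neg_right (u v : H) : 𝒮.inn u (-v) = -𝒮.inn u v := by
  have h := 𝒮.inn_add_right u v (-v)
  rw [add_neg_cancel, 𝒮.inn_zero_right] at h
  exact (neg_eq_of_add_eq_zero_right h.symm).symm

lemma inn_sub_left (u v w : H) : 𝒮.inn (u - v) w = 𝒮.inn u w - 𝒮.inn v w := by
  rw [sub_eq_add_neg, 𝒮.inn_add_left', 𝒮.inn_neg_left, sub_eq_add_neg]

lemma inn_sub_right (u v w : H) : 𝒮.inn u (v - w) = 𝒮.inn u v - 𝒮.inn u w := by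
  rw [sub_eq_add_neg, 𝒮.inn_add_right, 𝒮.inn_neg_right, sub_eq_add_neg]

lemma norm_smul'' (u : H) (q : ℍ) : ‖𝒮.smul u q‖ = ‖q‖ * ‖u‖ := by
  apply real_eq_of_sq_eq (norm_nonneg _) (by positivity)
  rw [𝒮.norm_sq', 𝒮.inn_smul_right, 𝒮.inn_smul_left', 𝒮.inn_self_real]
  rw [show star q * ((((𝒮.inn u u).re : ℝ)) : ℍ) * q = (((𝒮.inn u u).re : ℝ) : ℍ) * (star q * q) by
    rw [← Quaternion.coe_commutes, mul_assoc]]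
  rw [Quaternion.star_mul_self]
  rw [← Quaternion.coe_mul]
  rw [Quaternion.re_coe]
  rw [Quaternion.normSq_eq_norm_mul_self, ← 𝒮.norm_sq']
  ring

lemma eq_of_inn_eq {v w : H} (h : ∀ u : H, 𝒮.inn u v = 𝒮.inn u w) : v = w := by
  have h2 : 𝒮.inn (v - w) (v - w) = 0 := by
    rw [𝒮.inn_sub_right, h (v-w), sub_self]
  have h3 : ‖v - w‖^2 = 0 := by rw [𝒮.norm_sq', h2]; exact Quaternion.re_zero
  have h4 : v - w = 0 := by
    rw [pow_eq_zero_iff (by norm_num), norm_eq_zero] at h3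
    exact h3
  exact sub_eq_zero.mp h4

end QHS


end AuxExt

set_option maxHeartbeats 3000000 in
/-- **extension of ℂ_ι-linear operators on `H₊^{Jι}`.**
Every bounded `ℂ_ι`-linear operator `T` on `H₊ = {u : J u = u ι}` admits a unique bounded
right ℍ-linear extension `T̃` to `H`; moreover `‖T̃‖ = ‖T‖`, `J T̃ = T̃ J`,
`(T̃)* = (T*)~`, `(S T)~ = S̃ T̃`, and `T̃ ≥ 0` whenever `T ≥ 0`. -/
theorem extension_of_complex_linear_operators
    {H : Type} [NormedAddCommGroup H] [CompleteSpace H] (𝒮 : QHS H)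
    (J : H → H) (hJlin : 𝒮.RightLinear J) (hJbdd : BoundedOp J)
    (hJanti : 𝒮.AntiSelfAdjointOp J) (hJuni : 𝒮.UnitaryOp J)
    (ι : ℍ) (hι : ι ^ 2 = -1)
    (T : H → H)
    (hTmaps : ∀ u ∈ 𝒮.Hplus J ι, T u ∈ 𝒮.Hplus J ι)
    (hTadd : ∀ u ∈ 𝒮.Hplus J ι, ∀ v ∈ 𝒮.Hplus J ι, T (u + v) = T u + T v)
    (hTsmul : ∀ u ∈ 𝒮.Hplus J ι, ∀ c ∈ Cslice ι, T (𝒮.smul u c) = 𝒮.smul (T u) c)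
    (hTbdd : ∃ C : ℝ, ∀ u ∈ 𝒮.Hplus J ι, ‖T u‖ ≤ C * ‖u‖) :
    (∃! Te : H → H, 𝒮.RightLinear Te ∧ BoundedOp Te ∧ ∀ u ∈ 𝒮.Hplus J ι, Te u = T u) ∧
    ∀ Te : H → H, (𝒮.RightLinear Te ∧ BoundedOp Te ∧ ∀ u ∈ 𝒮.Hplus J ι, Te u = T u) →
      -- (a) ‖T̃‖ = ‖T‖
      (opNorm Te = sInf {C : ℝ | 0 ≤ C ∧ ∀ u ∈ 𝒮.Hplus J ι, ‖T u‖ ≤ C * ‖u‖}) ∧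
      -- (b) J T̃ = T̃ J
      (∀ u : H, J (Te u) = Te (J u)) ∧
      -- (c) (T̃)* = (T*)~ : if S is the adjoint of T on H₊ then any extension Se of S
      -- is the adjoint of Te
      (∀ S Se : H → H,
        (∀ u ∈ 𝒮.Hplus J ι, S u ∈ 𝒮.Hplus J ι) →
        (∀ u ∈ 𝒮.Hplus J ι, ∀ v ∈ 𝒮.Hplus J ι, 𝒮.inn (S u) v = 𝒮.inn u (T v)) →
        (𝒮.RightLinear Se ∧ BoundedOp Se ∧ ∀ u ∈ 𝒮.Hplus J ι, Se u = S u) →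
        𝒮.AdjointPair Te Se) ∧
      -- (d) (S T)~ = S̃ T̃ for every bounded ℂ_ι-linear S on H₊
      (∀ S Se : H → H,
        (∀ u ∈ 𝒮.Hplus J ι, S u ∈ 𝒮.Hplus J ι) →
        (∀ u ∈ 𝒮.Hplus J ι, ∀ v ∈ 𝒮.Hplus J ι, S (u + v) = S u + S v) →
        (∀ u ∈ 𝒮.Hplus J ι, ∀ c ∈ Cslice ι, S (𝒮.smul u c) = 𝒮.smul (S u) c) →
        (∃ C : ℝ, ∀ u ∈ 𝒮.Hplus J ι, ‖S u‖ ≤ C * ‖u‖) →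
        (𝒮.RightLinear Se ∧ BoundedOp Se ∧ ∀ u ∈ 𝒮.Hplus J ι, Se u = S u) →
        (𝒮.RightLinear (fun u => Se (Te u)) ∧ BoundedOp (fun u => Se (Te u)) ∧
          ∀ u ∈ 𝒮.Hplus J ι, Se (Te u) = S (T u))) ∧
      -- (e) T̃ ≥ 0 whenever T ≥ 0
      ((∀ u ∈ 𝒮.Hplus J ι,
          𝒮.inn u (T u) = ((((𝒮.inn u (T u)).re : ℝ)) : ℍ) ∧ 0 ≤ (𝒮.inn u (T u)).re) →
        𝒮.PositiveOp Te) := by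
  classical
  -- quaternion setup
  have hιm : ι * ι = -1 := by rw [← pow_two]; exact hι
  obtain ⟨j, hjm, hanti⟩ := exists_anticomm hιm
  have hji : j * ι = -(ι * j) := hji' hιm hjm hanti
  have hkm : (ι * j) * (ι * j) = -1 := hk' hιm hjm hanti
  have hp1 : ι * (ι * j) = -j := p1' hιm hjm hanti
  have hp3 : j * (ι * j) = ι := p3' hιm hjm hanti
  have hp4 : (ι * j) * ι = j := p4' hιm hjm hanti
  have hp5 : (ι * j) * j = -ι := p5' hιm hjm hanti
  obtain ⟨rι, nι⟩ := qsq_neg_one hιm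
  obtain ⟨rj, njsq⟩ := qsq_neg_one hjm
  have sι : star ι = -ι := by ext <;> simp [rι]
  have sj : star j = -j := by ext <;> simp [rj]
  have njj : ‖j‖ = 1 := by
    apply real_eq_of_sq_eq (norm_nonneg _) zero_le_one
    have h1 : ‖j‖ ^ 2 = Quaternion.normSq j := by
      rw [Quaternion.normSq_eq_norm_mul_self]; ring
    rw [h1, Quaternion.normSq_def', rj]
    nlinarith [njsq]
  have hjmj : j * (-j) = 1 := by rw [mul_neg, hjm, neg_neg]
  -- J basics
  have Jadd : ∀ u v : H, J (u + v) = J u + J v := hJlin.1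
  have Jsmul : ∀ (u : H) (q : ℍ), J (𝒮.smul u q) = 𝒮.smul (J u) q := hJlin.2
  have Jinn : ∀ u v : H, 𝒮.inn (J u) (J v) = 𝒮.inn u v := hJuni.2.2
  have Jzero : J 0 = 0 := by
    have h := Jadd 0 0; rw [add_zero] at h; exact left_eq_add.mp h
  have Jneg : ∀ u : H, J (-u) = -J u := by
    intro u; have h := Jadd u (-u)
    rw [add_neg_cancel, Jzero] at h
    exact (neg_eq_of_add_eq_zero_right h.symm).symm
  have Jsub : ∀ u v : H, J (u - v) = J u - J v := by
    intro u v; rw [sub_eq_add_neg, Jadd, Jneg, sub_eq_add_neg]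
  have JJ : ∀ u : H, J (J u) = -u := by
    intro v
    apply 𝒮.eq_of_inn_eq
    intro u
    have h1 : 𝒮.inn (J u) (J v) = -𝒮.inn u (J (J v)) := hJanti u (J v)
    rw [Jinn] at h1
    rw [𝒮.inn_neg_right, h1, neg_neg]
  -- half
  set half : ℍ := (((2:ℝ)⁻¹ : ℝ) : ℍ) with hhalfdef
  have smul2 : ∀ (x : H) (p q : ℍ), 𝒮.smul (𝒮.smul x p) q = 𝒮.smul x (p * q) :=
    fun x p q => (𝒮.smul_mul' x p q).symm
  have smhalf : ∀ u : H, 𝒮.smul (u + u) half = u := by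
    intro u
    have h1 : u + u = 𝒮.smul u 2 := by
      conv_lhs => rw [← 𝒮.smul_one' u]
      rw [← 𝒮.smul_add']
      norm_num
    have h2 : (2 : ℍ) * half = 1 := by
      rw [hhalfdef, show (2:ℍ) = ((2:ℝ):ℍ) by norm_cast, ← Quaternion.coe_mul]
      norm_num
    rw [h1, smul2, h2, 𝒮.smul_one']
  have sm_half_comm : ∀ (x : H) (q : ℍ),
      𝒮.smul (𝒮.smul x half) q = 𝒮.smul (𝒮.smul x q) half := by
    intro x q
    rw [smul2, smul2, hhalfdef, Quaternion.coe_commutes]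
  -- projections
  set P : H → H := fun u => 𝒮.smul (u - 𝒮.smul (J u) ι) half with hPdef
  set M : H → H := fun u => 𝒮.smul (u + 𝒮.smul (J u) ι) half with hMdef
  set N : H → H := fun u => 𝒮.smul (M u) j with hNdef
  have Pexp : ∀ u, P u = 𝒮.smul (u - 𝒮.smul (J u) ι) half := fun u => rfl
  have Mexp : ∀ u, M u = 𝒮.smul (u + 𝒮.smul (J u) ι) half := fun u => rfl
  have Nexp : ∀ u, N u = 𝒮.smul (M u) j := fun u => rfl
  have hPM : ∀ u, P u + M u = u := by
    intro u
    rw [Pexp, Mexp, ← 𝒮.add_smul',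
      show u - 𝒮.smul (J u) ι + (u + 𝒮.smul (J u) ι) = u + u by abel, smhalf]
  have Psm : ∀ (u : H) (c : ℍ),
      P (𝒮.smul u c) = 𝒮.smul (𝒮.smul u c - 𝒮.smul (J u) (c * ι)) half := by
    intro u c
    rw [Pexp, Jsmul, smul2]
  have Psm' : ∀ (u : H) (c : ℍ),
      𝒮.smul (P u) c = 𝒮.smul (𝒮.smul u c - 𝒮.smul (J u) (ι * c)) half := by
    intro u c
    rw [Pexp, sm_half_comm, 𝒮.sub_smul'', smul2]
  have Msm : ∀ (u : H) (c : ℍ),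
      M (𝒮.smul u c) = 𝒮.smul (𝒮.smul u c + 𝒮.smul (J u) (c * ι)) half := by
    intro u c
    rw [Mexp, Jsmul, smul2]
  have Msm' : ∀ (u : H) (c : ℍ),
      𝒮.smul (M u) c = 𝒮.smul (𝒮.smul u c + 𝒮.smul (J u) (ι * c)) half := by
    intro u c
    rw [Mexp, sm_half_comm, 𝒮.add_smul', smul2]
  have hPmem : ∀ u, J (P u) = 𝒮.smul (P u) ι := by
    intro u
    rw [Pexp, Jsmul, Jsub, Jsmul, JJ, 𝒮.neg_smul'', sub_neg_eq_add, sm_half_comm,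
      𝒮.sub_smul'', smul2, hιm, 𝒮.smul_neg'', 𝒮.smul_one', sub_neg_eq_add]
    congr 1
    abel
  have hMmem : ∀ u, J (M u) = -(𝒮.smul (M u) ι) := by
    intro u
    rw [Mexp, Jsmul, Jadd, Jsmul, JJ, 𝒮.neg_smul'' u ι,
      sm_half_comm (u + 𝒮.smul (J u) ι) ι, 𝒮.add_smul' u (𝒮.smul (J u) ι) ι,
      smul2 (J u) ι ι, hιm, 𝒮.smul_neg'' (J u) 1, 𝒮.smul_one',
      ← 𝒮.neg_smul'' (𝒮.smul u ι + -(J u)) half]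
    congr 1
    abel
  have hNmem : ∀ u, J (N u) = 𝒮.smul (N u) ι := by
    intro u
    rw [Nexp, Jsmul, hMmem, 𝒮.neg_smul'' (𝒮.smul (M u) ι) j, smul2 (M u) ι j,
      smul2 (M u) j ι, hanti, 𝒮.smul_neg'' (M u) (j * ι), neg_neg]
  have hMN : ∀ u, M u = 𝒮.smul (N u) (-j) := by
    intro u
    rw [Nexp, smul2, hjmj, 𝒮.smul_one']
  have hplusP : ∀ u, J u = 𝒮.smul u ι → P u = u := by
    intro u hu
    rw [Pexp, hu, smul2 u ι ι, hιm, 𝒮.smul_neg'' u 1, 𝒮.smul_one', sub_neg_eq_add, smhalf]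
  have hplusN : ∀ u, J u = 𝒮.smul u ι → N u = 0 := by
    intro u hu
    rw [Nexp, Mexp, hu, smul2 u ι ι, hιm, 𝒮.smul_neg'' u 1, 𝒮.smul_one', add_neg_cancel,
      𝒮.zero_smul'', 𝒮.zero_smul'']
  -- T basics
  have Tslice : ∀ u, J u = 𝒮.smul u ι → ∀ a b : ℝ,
      T (𝒮.smul u ((a:ℍ) + ι * (b:ℍ))) = 𝒮.smul (T u) ((a:ℍ) + ι * (b:ℍ)) :=
    fun u hu a b => hTsmul u hu _ ⟨a, b, rfl⟩
  have cι : ((0:ℝ):ℍ) + ι * ((1:ℝ):ℍ) = ι := by push_cast; simp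
  have cnegι : ((0:ℝ):ℍ) + ι * (((-1):ℝ):ℍ) = -ι := by push_cast; simp
  have cneg1 : (((-1):ℝ):ℍ) + ι * ((0:ℝ):ℍ) = -1 := by push_cast; simp
  have cr : ∀ r : ℝ, ((r:ℝ):ℍ) + ι * ((0:ℝ):ℍ) = (r:ℍ) := by intro r; push_cast; simp
  have Tι : ∀ u, J u = 𝒮.smul u ι → T (𝒮.smul u ι) = 𝒮.smul (T u) ι := by
    intro u hu; have h := Tslice u hu 0 1; rwa [cι] at h
  have Tnegι : ∀ u, J u = 𝒮.smul u ι → T (𝒮.smul u (-ι)) = 𝒮.smul (T u) (-ι) := by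
    intro u hu; have h := Tslice u hu 0 (-1); rwa [cnegι] at h
  have Tr : ∀ u, J u = 𝒮.smul u ι → ∀ r : ℝ,
      T (𝒮.smul u ((r:ℝ):ℍ)) = 𝒮.smul (T u) ((r:ℝ):ℍ) := by
    intro u hu r; have h := Tslice u hu r 0; rwa [cr r] at h
  have T0 : T 0 = 0 := by
    have h0 : J (0:H) = 𝒮.smul 0 ι := by rw [Jzero, 𝒮.zero_smul'']
    have h := hTadd 0 h0 0 h0
    rw [add_zero] at h
    exact left_eq_add.mp h
  have Tneg : ∀ u, J u = 𝒮.smul u ι → T (-u) = -T u := by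
    intro u hu
    have h := Tslice u hu (-1) 0
    rw [cneg1, 𝒮.smul_neg'' u, 𝒮.smul_neg'' (T u), 𝒮.smul_one', 𝒮.smul_one'] at h
    exact h
  have plus_add : ∀ u v, J u = 𝒮.smul u ι → J v = 𝒮.smul v ι →
      J (u + v) = 𝒮.smul (u + v) ι := by
    intro u v hu hv; rw [Jadd, hu, hv, 𝒮.add_smul']
  have plus_smulc : ∀ (c : ℍ), c * ι = ι * c → ∀ u, J u = 𝒮.smul u ι →
      J (𝒮.smul u c) = 𝒮.smul (𝒮.smul u c) ι := by
    intro c hc u hu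
    rw [Jsmul, hu, smul2, smul2, ← hc]
  -- the extension
  set Te : H → H := fun u => T (P u) - 𝒮.smul (T (N u)) j with hTedef
  have Teexp : ∀ u, Te u = T (P u) - 𝒮.smul (T (N u)) j := fun u => rfl
  have TeExt : ∀ u, J u = 𝒮.smul u ι → Te u = T u := by
    intro u hu
    rw [Teexp, hplusP u hu, hplusN u hu, T0, 𝒮.zero_smul'', sub_zero]
  have Padd : ∀ u v, P (u + v) = P u + P v := by
    intro u v
    rw [Pexp (u + v), Pexp u, Pexp v, Jadd, 𝒮.add_smul' (J u) (J v) ι,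
      ← 𝒮.add_smul' (u - 𝒮.smul (J u) ι) (v - 𝒮.smul (J v) ι) half]
    congr 1
    abel
  have Madd : ∀ u v, M (u + v) = M u + M v := by
    intro u v
    rw [Mexp (u + v), Mexp u, Mexp v, Jadd, 𝒮.add_smul' (J u) (J v) ι,
      ← 𝒮.add_smul' (u + 𝒮.smul (J u) ι) (v + 𝒮.smul (J v) ι) half]
    congr 1
    abel
  have Nadd : ∀ u v, N (u + v) = N u + N v := by
    intro u v
    rw [Nexp, Nexp, Nexp, Madd, 𝒮.add_smul']
  have TeAdd : ∀ u v, Te (u + v) = Te u + Te v := by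
    intro u v
    rw [Teexp, Teexp, Teexp, Padd, Nadd, hTadd _ (hPmem u) _ (hPmem v),
      hTadd _ (hNmem u) _ (hNmem v), 𝒮.add_smul']
    abel
  have TeR : ∀ u (r : ℝ), Te (𝒮.smul u ((r:ℝ):ℍ)) = 𝒮.smul (Te u) ((r:ℝ):ℍ) := by
    intro u r
    have hcc : ((r:ℝ):ℍ) * ι = ι * ((r:ℝ):ℍ) := Quaternion.coe_commutes r ι
    have hP' : P (𝒮.smul u ((r:ℝ):ℍ)) = 𝒮.smul (P u) ((r:ℝ):ℍ) := by
      rw [Psm, Psm', hcc]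
    have hM' : M (𝒮.smul u ((r:ℝ):ℍ)) = 𝒮.smul (M u) ((r:ℝ):ℍ) := by
      rw [Msm, Msm', hcc]
    have hN' : N (𝒮.smul u ((r:ℝ):ℍ)) = 𝒮.smul (N u) ((r:ℝ):ℍ) := by
      rw [Nexp (𝒮.smul u ((r:ℝ):ℍ)), hM', smul2 (M u) ((r:ℝ):ℍ) j,
        Quaternion.coe_commutes r j, ← smul2 (M u) j ((r:ℝ):ℍ), ← Nexp u]
    rw [Teexp, Teexp, hP', hN', Tr _ (hPmem u) r, Tr _ (hNmem u) r,
      𝒮.sub_smul'' (T (P u)) (𝒮.smul (T (N u)) j) ((r:ℝ):ℍ),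
      smul2 (T (N u)) ((r:ℝ):ℍ) j, smul2 (T (N u)) j ((r:ℝ):ℍ),
      Quaternion.coe_commutes r j]
  have TeI : ∀ u, Te (𝒮.smul u ι) = 𝒮.smul (Te u) ι := by
    intro u
    have hP' : P (𝒮.smul u ι) = 𝒮.smul (P u) ι := by rw [Psm, Psm']
    have hM' : M (𝒮.smul u ι) = 𝒮.smul (M u) ι := by rw [Msm, Msm']
    have hN' : N (𝒮.smul u ι) = 𝒮.smul (N u) (-ι) := by
      rw [Nexp (𝒮.smul u ι), hM', smul2 (M u) ι j, hanti, 𝒮.smul_neg'' (M u) (j * ι),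
        ← smul2 (M u) j ι, ← Nexp u, 𝒮.smul_neg'' (N u) ι]
    rw [Teexp, Teexp, hP', hN', Tι _ (hPmem u), Tnegι _ (hNmem u),
      𝒮.sub_smul'' (T (P u)) (𝒮.smul (T (N u)) j) ι,
      smul2 (T (N u)) (-ι) j, smul2 (T (N u)) j ι,
      show (-ι) * j = j * ι by rw [neg_mul, ← hji]]
  have TeJ : ∀ u, Te (𝒮.smul u j) = 𝒮.smul (Te u) j := by
    intro u
    have hP' : P (𝒮.smul u j) = N u := by
      rw [Psm, hji, 𝒮.smul_neg'' (J u) (ι * j), sub_neg_eq_add, Nexp, Mexp,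
        sm_half_comm (u + 𝒮.smul (J u) ι) j, 𝒮.add_smul' u (𝒮.smul (J u) ι) j,
        smul2 (J u) ι j]
    have hM' : M (𝒮.smul u j) = 𝒮.smul (P u) j := by
      rw [Msm, hji, 𝒮.smul_neg'' (J u) (ι * j), Psm']
      congr 1
      abel
    have hN' : N (𝒮.smul u j) = -(P u) := by
      rw [Nexp (𝒮.smul u j), hM', smul2 (P u) j j, hjm, 𝒮.smul_neg'' (P u) 1,
        𝒮.smul_one']
    rw [Teexp, Teexp, hP', hN', Tneg _ (hPmem u), 𝒮.neg_smul'' (T (P u)) j,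
      𝒮.sub_smul'' (T (P u)) (𝒮.smul (T (N u)) j) j, smul2 (T (N u)) j j, hjm,
      𝒮.smul_neg'' (T (N u)) 1, 𝒮.smul_one']
    abel
  have TeS : ∀ u q, Te (𝒮.smul u q) = 𝒮.smul (Te u) q := by
    intro u q
    obtain ⟨a, b, c, d, hq⟩ := qdecomp hιm hjm hanti q
    rw [hq, 𝒮.smul_add', 𝒮.smul_add', 𝒮.smul_add', TeAdd, TeAdd, TeAdd,
      𝒮.smul_mul' u ((b:ℝ):ℍ) ι, 𝒮.smul_mul' u ((c:ℝ):ℍ) j,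
      𝒮.smul_mul' u ((d:ℝ):ℍ) (ι*j), 𝒮.smul_mul' (𝒮.smul u ((d:ℝ):ℍ)) ι j]
    simp only [TeR, TeI, TeJ]
    rw [𝒮.smul_add' (Te u), 𝒮.smul_add' (Te u), 𝒮.smul_add' (Te u),
      𝒮.smul_mul' (Te u) ((b:ℝ):ℍ) ι, 𝒮.smul_mul' (Te u) ((c:ℝ):ℍ) j,
      𝒮.smul_mul' (Te u) ((d:ℝ):ℍ) (ι*j), 𝒮.smul_mul' (𝒮.smul (Te u) ((d:ℝ):ℍ)) ι j]
  -- Pythagoras / boundedness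
  have hre0 : ∀ v w : H, J v = 𝒮.smul v ι → J w = -(𝒮.smul w ι) →
      (𝒮.inn v w).re = 0 := by
    intro v w hv hw
    have h1 : 𝒮.inn v w = ι * 𝒮.inn v w * ι := by
      calc 𝒮.inn v w = 𝒮.inn (J v) (J w) := (Jinn v w).symm
        _ = 𝒮.inn (𝒮.smul v ι) (-(𝒮.smul w ι)) := by rw [hv, hw]
        _ = -(star ι * (𝒮.inn v w * ι)) := by
            rw [𝒮.inn_neg_right, 𝒮.inn_smul_left', 𝒮.inn_smul_right]
        _ = ι * 𝒮.inn v w * ι := by rw [sι]; noncomm_ring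
    have h2 := congrArg QuaternionAlgebra.re h1
    rw [qre_mul_comm (ι * 𝒮.inn v w) ι, ← mul_assoc, hιm] at h2
    simp only [neg_mul, one_mul, Quaternion.re_neg] at h2
    linarith
  have pyth : ∀ v w : H, J v = 𝒮.smul v ι → J w = -(𝒮.smul w ι) →
      ‖v + w‖ ^ 2 = ‖v‖ ^ 2 + ‖w‖ ^ 2 := by
    intro v w hv hw
    have hr1 : (𝒮.inn v w).re = 0 := hre0 v w hv hw
    have hr2 : (𝒮.inn w v).re = 0 := by
      rw [𝒮.inn_conj w v]
      simp [hr1]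
    rw [𝒮.norm_sq', 𝒮.norm_sq', 𝒮.norm_sq', 𝒮.inn_add_right, 𝒮.inn_add_left',
      𝒮.inn_add_left']
    simp only [Quaternion.re_add]
    linarith
  have minusMem : ∀ x : H, J x = 𝒮.smul x ι →
      J (-(𝒮.smul x j)) = -(𝒮.smul (-(𝒮.smul x j)) ι) := by
    intro x hx
    rw [Jneg, Jsmul, hx, 𝒮.neg_smul'' (𝒮.smul x j) ι, neg_neg,
      smul2 x ι j, smul2 x j ι, hanti, 𝒮.smul_neg'' x (j * ι), neg_neg]
  have hTeSq : ∀ u, ‖Te u‖ ^ 2 = ‖T (P u)‖ ^ 2 + ‖T (N u)‖ ^ 2 := by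
    intro u
    have h1 := pyth (T (P u)) (-(𝒮.smul (T (N u)) j)) (hTmaps _ (hPmem u))
      (minusMem (T (N u)) (hTmaps _ (hNmem u)))
    rw [show T (P u) + -(𝒮.smul (T (N u)) j) = Te u by rw [Teexp]; abel] at h1
    rw [h1, norm_neg, 𝒮.norm_smul'' (T (N u)) j, njj, one_mul]
  have huSq : ∀ u : H, ‖u‖ ^ 2 = ‖P u‖ ^ 2 + ‖N u‖ ^ 2 := by
    intro u
    have h1 := pyth (P u) (M u) (hPmem u) (hMmem u)
    rw [hPM u] at h1
    rw [h1, Nexp, 𝒮.norm_smul'' (M u) j, njj, one_mul]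
  have TeBound : ∀ C : ℝ, 0 ≤ C → (∀ x, J x = 𝒮.smul x ι → ‖T x‖ ≤ C * ‖x‖) →
      ∀ u, ‖Te u‖ ≤ C * ‖u‖ := by
    intro C hC hc u
    have h1 := hc (P u) (hPmem u)
    have h2 := hc (N u) (hNmem u)
    apply real_le_of_sq_le (norm_nonneg _) (by positivity)
    rw [hTeSq u, mul_pow]
    have e1 : ‖T (P u)‖ ^ 2 ≤ C ^ 2 * ‖P u‖ ^ 2 :=
      sq_le_sq_mul (norm_nonneg _) hC h1
    have e2 : ‖T (N u)‖ ^ 2 ≤ C ^ 2 * ‖N u‖ ^ 2 :=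
      sq_le_sq_mul (norm_nonneg _) hC h2
    have e3 : C ^ 2 * ‖u‖ ^ 2 = C ^ 2 * ‖P u‖ ^ 2 + C ^ 2 * ‖N u‖ ^ 2 := by
      rw [huSq u]; ring
    linarith
  have TeBdd : ∃ C : ℝ, 0 ≤ C ∧ ∀ u, ‖Te u‖ ≤ C * ‖u‖ := by
    obtain ⟨C, hC⟩ := hTbdd
    refine ⟨max C 0, le_max_right _ _, TeBound (max C 0) (le_max_right _ _) ?_⟩
    intro x hx
    exact le_trans (hC x hx) (mul_le_mul_of_nonneg_right (le_max_left _ _) (norm_nonneg _))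
  -- canonical form of any extension
  have ext_form : ∀ (S' Se' : H → H), (∀ u v : H, Se' (u + v) = Se' u + Se' v) →
      (∀ (u : H) (q : ℍ), Se' (𝒮.smul u q) = 𝒮.smul (Se' u) q) →
      (∀ u, J u = 𝒮.smul u ι → Se' u = S' u) →
      ∀ u, Se' u = S' (P u) - 𝒮.smul (S' (N u)) j := by
    intro S' Se' hadd hsm hext u
    conv_lhs => rw [← hPM u]
    rw [hadd, hext _ (hPmem u), hMN u, hsm, hext _ (hNmem u), 𝒮.smul_neg'' (S' (N u)) j]
    abel
  have TeLin : 𝒮.RightLinear Te := ⟨TeAdd, TeS⟩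
  have TeProp : 𝒮.RightLinear Te ∧ BoundedOp Te ∧ ∀ u ∈ 𝒮.Hplus J ι, Te u = T u := by
    refine ⟨TeLin, ?_, fun u hu => TeExt u hu⟩
    obtain ⟨C, _, hC⟩ := TeBdd
    exact ⟨C, hC⟩
  have TeUniq : ∀ Te' : H → H,
      (𝒮.RightLinear Te' ∧ BoundedOp Te' ∧ ∀ u ∈ 𝒮.Hplus J ι, Te' u = T u) → Te' = Te := by
    intro Te' h
    funext u
    rw [ext_form T Te' h.1.1 h.1.2 h.2.2 u, Teexp]
  constructor
  · exact ⟨Te, TeProp, TeUniq⟩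
  · intro Te' hTe'
    have hTT : Te' = Te := TeUniq Te' hTe'
    subst hTT
    refine ⟨?parta, ?partb, ?partc, ?partd, ?parte⟩
    case parta =>
      unfold opNorm
      congr 1
      ext C
      simp only [Set.mem_setOf_eq]
      constructor
      · rintro ⟨h0, h1⟩
        exact ⟨h0, fun u hu => by rw [← TeExt u hu]; exact h1 u⟩
      · rintro ⟨h0, h1⟩
        exact ⟨h0, TeBound C h0 h1⟩
    case partb =>
      have TmapsE : ∀ x, J x = 𝒮.smul x ι → J (T x) = 𝒮.smul (T x) ι :=
        fun x hx => hTmaps x hx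
      intro u
      have PJ : P (J u) = 𝒮.smul (P u) ι := by
        rw [Pexp (J u), JJ, 𝒮.neg_smul'' u ι, sub_neg_eq_add, Psm' u ι, hιm,
          𝒮.smul_neg'' (J u) 1, 𝒮.smul_one', sub_neg_eq_add]
        congr 1
        abel
      have MJ : M (J u) = -(𝒮.smul (M u) ι) := by
        rw [Mexp (J u), JJ, 𝒮.neg_smul'' u ι, Msm' u ι, hιm,
          𝒮.smul_neg'' (J u) 1, 𝒮.smul_one',
          ← 𝒮.neg_smul'' (𝒮.smul u ι + -(J u)) half]
        congr 1
        abel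
      have NJ : N (J u) = 𝒮.smul (N u) ι := by
        rw [Nexp (J u), MJ, 𝒮.neg_smul'' (𝒮.smul (M u) ι) j, smul2 (M u) ι j, hanti,
          𝒮.smul_neg'' (M u) (j * ι), neg_neg, Nexp u, smul2 (M u) j ι]
      rw [Teexp u, Teexp (J u), PJ, NJ, Jsub, Jsmul, TmapsE _ (hPmem u),
        TmapsE _ (hNmem u), Tι _ (hPmem u), Tι _ (hNmem u),
        smul2 (T (N u)) ι j]
    case partc =>
      rintro S Se hSmaps hSadj ⟨hSlin, hSbdd2, hSext⟩
      intro u v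
      have hse := ext_form S Se hSlin.1 hSlin.2 hSext
      have hvdec : v = P v + 𝒮.smul (N v) (-j) := by
        rw [← hMN v]; exact (hPM v).symm
      have hudec : u = P u + 𝒮.smul (N u) (-j) := by
        rw [← hMN u]; exact (hPM u).symm
      have innS : ∀ y, J y = 𝒮.smul y ι → 𝒮.inn (S y) v =
          𝒮.inn y (T (P v)) + 𝒮.inn y (T (N v)) * (-j) := by
        intro y hy
        conv_lhs => rw [hvdec]
        rw [𝒮.inn_add_right, 𝒮.inn_smul_right (S y) (N v) (-j),
          hSadj y hy (P v) (hPmem v), hSadj y hy (N v) (hNmem v)]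
      have lhs_eq : 𝒮.inn (Se u) v = 𝒮.inn (P u) (T (P v)) + 𝒮.inn (P u) (T (N v)) * (-j)
          - star j * (𝒮.inn (N u) (T (P v)) + 𝒮.inn (N u) (T (N v)) * (-j)) := by
        rw [hse u, 𝒮.inn_sub_left, 𝒮.inn_smul_left' (S (N u)) v j,
          innS _ (hPmem u), innS _ (hNmem u)]
      have rhs_eq : 𝒮.inn u (Te v) =
          𝒮.inn (P u) (T (P v)) - 𝒮.inn (P u) (T (N v)) * j
          + star (-j) * (𝒮.inn (N u) (T (P v)) - 𝒮.inn (N u) (T (N v)) * j) := by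
        calc 𝒮.inn u (Te v)
            = 𝒮.inn (P u + 𝒮.smul (N u) (-j)) (T (P v) - 𝒮.smul (T (N v)) j) := by
              rw [Teexp v, ← hudec]
          _ = _ := by
              rw [𝒮.inn_add_left',
                𝒮.inn_smul_left' (N u) (T (P v) - 𝒮.smul (T (N v)) j) (-j),
                𝒮.inn_sub_right, 𝒮.inn_sub_right,
                𝒮.inn_smul_right (P u) (T (N v)) j, 𝒮.inn_smul_right (N u) (T (N v)) j]
      rw [lhs_eq, rhs_eq, star_neg, sj, neg_neg]
      noncomm_ring
    case partd =>
      rintro S Se hSmaps hSadd hSsmul hSbdd ⟨hSlin, hSbddE, hSext⟩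
      refine ⟨⟨fun u v => ?_, fun u q => ?_⟩, ?_, ?_⟩
      · show Se (Te (u + v)) = Se (Te u) + Se (Te v)
        rw [TeAdd]; exact hSlin.1 _ _
      · show Se (Te (𝒮.smul u q)) = 𝒮.smul (Se (Te u)) q
        rw [TeS]; exact hSlin.2 _ _
      · obtain ⟨C1, hC1⟩ := hSbddE
        obtain ⟨C2, hC2pos, hC2⟩ := TeBdd
        refine ⟨max C1 0 * C2, fun u => ?_⟩
        calc ‖Se (Te u)‖ ≤ C1 * ‖Te u‖ := hC1 (Te u)
          _ ≤ max C1 0 * ‖Te u‖ :=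
              mul_le_mul_of_nonneg_right (le_max_left _ _) (norm_nonneg _)
          _ ≤ max C1 0 * (C2 * ‖u‖) :=
              mul_le_mul_of_nonneg_left (hC2 u) (le_max_right _ _)
          _ = max C1 0 * C2 * ‖u‖ := by ring
      · intro u hu
        rw [TeExt u hu]
        exact hSext (T u) (hTmaps u hu)
    case parte =>
      intro hTpos
      -- quaternion slice helpers
      have slice_inj : ∀ a b a' b' : ℝ,
          ((a:ℝ):ℍ) + ((b:ℝ):ℍ)*ι = ((a':ℝ):ℍ) + ((b':ℝ):ℍ)*ι → a = a' ∧ b = b' := by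
        intro a b a' b' h
        have h5 : (((a-a' :ℝ)):ℍ) + (((b-b' :ℝ)):ℍ)*ι + (((0:ℝ)):ℍ)*j + (((0:ℝ)):ℍ)*(ι*j)
            = (((a:ℝ):ℍ) + ((b:ℝ):ℍ)*ι) - (((a':ℝ):ℍ) + ((b':ℝ):ℍ)*ι) := by
          push_cast
          noncomm_ring
        rw [h, sub_self] at h5
        obtain ⟨e1, e2, _, _⟩ := coords_zero hιm hjm hanti _ _ _ _ h5
        exact ⟨by linarith, by linarith⟩
      have starSlice : ∀ a b : ℝ,
          star (((a:ℝ):ℍ) + ((b:ℝ):ℍ)*ι) = ((a:ℝ):ℍ) + (((-b :ℝ)):ℍ)*ι := by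
        intro a b
        rw [star_add, star_mul, sι]
        simp only [Quaternion.star_coe]
        rw [neg_mul, ← Quaternion.coe_commutes, ← neg_mul]
        push_cast
        abel
      have hcoeιι : ∀ r : ℝ, (-ι) * (((r:ℝ):ℍ) * ι) = ((r:ℝ):ℍ) := by
        intro r
        rw [neg_mul, ← mul_assoc, ← Quaternion.coe_commutes, mul_assoc, hιm,
          mul_neg_one, neg_neg]
      have slice_commι : ∀ a b : ℝ,
          ι * (((a:ℝ):ℍ) + ((b:ℝ):ℍ)*ι) = (((a:ℝ):ℍ) + ((b:ℝ):ℍ)*ι) * ι := by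
        intro a b
        rw [mul_add, add_mul, ← mul_assoc]
        congr 1
        · exact (Quaternion.coe_commutes a ι).symm
        · congr 1
          exact (Quaternion.coe_commutes b ι).symm
      have sliceMulι : ∀ A B : ℝ,
          (((A:ℝ):ℍ) + ((B:ℝ):ℍ)*ι)*ι = (((-B :ℝ)):ℍ) + ((A:ℝ):ℍ)*ι := by
        intro A B
        rw [add_mul, mul_assoc, hιm, mul_neg_one]
        push_cast
        abel
      have hjcoej : ∀ r : ℝ, j * (((r:ℝ):ℍ) * j) = -((r:ℝ):ℍ) := by
        intro r
        rw [← mul_assoc, ← Quaternion.coe_commutes, mul_assoc, hjm, mul_neg_one]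
      have hjstar : ∀ a b : ℝ,
          j * star (((a:ℝ):ℍ) + ((b:ℝ):ℍ)*ι) = (((a:ℝ):ℍ) + ((b:ℝ):ℍ)*ι) * j := by
        intro a b
        rw [starSlice, mul_add, add_mul]
        congr 1
        · exact (Quaternion.coe_commutes a j).symm
        · rw [← mul_assoc, ← Quaternion.coe_commutes, mul_assoc, hji, mul_neg,
            mul_assoc]
          push_cast
          noncomm_ring
      have idM : ∀ a b c d : ℝ,
          -(ι*((((a:ℝ):ℍ) + ((b:ℝ):ℍ)*ι + ((c:ℝ):ℍ)*j + ((d:ℝ):ℍ)*(ι*j))*ι))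
          = ((a:ℝ):ℍ) + ((b:ℝ):ℍ)*ι - ((c:ℝ):ℍ)*j - ((d:ℝ):ℍ)*(ι*j) := by
        intro a b c d
        have hc : ∀ r : ℝ, ((r:ℝ):ℍ) = r • (1:ℍ) := fun r => by
          rw [← Quaternion.coe_mul_eq_smul, mul_one]
        simp only [hc, add_mul, smul_mul_assoc, one_mul, hιm, hji, hp4,
          mul_add, mul_smul_comm, mul_neg, neg_mul, hp1, smul_neg, mul_one,
          mul_neg_one, neg_neg]
        module
      -- inner products of H₊ vectors lie in the slice
      have innCpm : ∀ v w : H, J v = 𝒮.smul v ι → J w = 𝒮.smul w ι →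
          ∃ a b : ℝ, 𝒮.inn v w = ((a:ℝ):ℍ) + ((b:ℝ):ℍ)*ι := by
        intro v w hv hw
        have h1 : 𝒮.inn v w = -(ι * (𝒮.inn v w * ι)) := by
          calc 𝒮.inn v w = 𝒮.inn (J v) (J w) := (Jinn v w).symm
            _ = 𝒮.inn (𝒮.smul v ι) (𝒮.smul w ι) := by rw [hv, hw]
            _ = star ι * (𝒮.inn v w * ι) := by
                rw [𝒮.inn_smul_left' v (𝒮.smul w ι) ι, 𝒮.inn_smul_right v w ι]
            _ = -(ι * (𝒮.inn v w * ι)) := by rw [sι, neg_mul]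
        obtain ⟨a, b, c, d, hx⟩ := qdecomp hιm hjm hanti (𝒮.inn v w)
        have h2 : 𝒮.inn v w = ((a:ℝ):ℍ) + ((b:ℝ):ℍ)*ι - ((c:ℝ):ℍ)*j - ((d:ℝ):ℍ)*(ι*j) := by
          conv_lhs => rw [h1, hx]
          exact idM a b c d
        have h4 := hx.symm.trans h2
        have h5 : (((2*c :ℝ)):ℍ)*j + (((2*d :ℝ)):ℍ)*(ι*j)
            = (((a:ℝ):ℍ) + ((b:ℝ):ℍ)*ι + ((c:ℝ):ℍ)*j + ((d:ℝ):ℍ)*(ι*j))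
              - (((a:ℝ):ℍ) + ((b:ℝ):ℍ)*ι - ((c:ℝ):ℍ)*j - ((d:ℝ):ℍ)*(ι*j)) := by
          simp only [Quaternion.coe_mul_eq_smul]
          module
        rw [← h4, sub_self] at h5
        have h6 : (((0:ℝ)):ℍ) + (((0:ℝ)):ℍ)*ι + (((2*c :ℝ)):ℍ)*j + (((2*d :ℝ)):ℍ)*(ι*j) = 0 := by
          have e0 : (((0:ℝ)):ℍ) + (((0:ℝ)):ℍ)*ι + (((2*c :ℝ)):ℍ)*j + (((2*d :ℝ)):ℍ)*(ι*j)
              = (((2*c :ℝ)):ℍ)*j + (((2*d :ℝ)):ℍ)*(ι*j) := by push_cast; noncomm_ring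
          rw [e0]
          exact h5
        obtain ⟨_, _, e3, e4⟩ := coords_zero hιm hjm hanti _ _ _ _ h6
        refine ⟨a, b, ?_⟩
        rw [hx, show c = 0 by linarith, show d = 0 by linarith]
        push_cast
        noncomm_ring
      -- self-adjointness on H₊ via polarization
      have hsa : ∀ x, J x = 𝒮.smul x ι → ∀ y, J y = 𝒮.smul y ι →
          𝒮.inn y (T x) = star (𝒮.inn x (T y)) := by
        intro x hx y hy
        obtain ⟨a1, b1, hF⟩ := innCpm x (T y) hx (hTmaps y hy)
        obtain ⟨a2, b2, hG⟩ := innCpm y (T x) hy (hTmaps x hx)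
        have qx := hTpos x hx
        have qy := hTpos y hy
        have hxy : J (x + y) = 𝒮.smul (x + y) ι := plus_add x y hx hy
        have q1 := hTpos (x + y) hxy
        have e1 : 𝒮.inn (x + y) (T (x + y)) =
            𝒮.inn x (T x) + 𝒮.inn y (T y) + (𝒮.inn x (T y) + 𝒮.inn y (T x)) := by
          rw [hTadd x hx y hy, 𝒮.inn_add_left', 𝒮.inn_add_right, 𝒮.inn_add_right]
          abel
        have hFG : 𝒮.inn x (T y) + 𝒮.inn y (T x) =
            ((((𝒮.inn (x+y) (T (x+y))).re - (𝒮.inn x (T x)).re - (𝒮.inn y (T y)).re : ℝ)):ℍ) := by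
          push_cast
          rw [← q1.1, ← qx.1, ← qy.1, e1]
          abel
        have hyι : J (𝒮.smul y ι) = 𝒮.smul (𝒮.smul y ι) ι := plus_smulc ι rfl y hy
        have hxyι : J (x + 𝒮.smul y ι) = 𝒮.smul (x + 𝒮.smul y ι) ι := plus_add _ _ hx hyι
        have q2 := hTpos (x + 𝒮.smul y ι) hxyι
        have e2 : 𝒮.inn (x + 𝒮.smul y ι) (T (x + 𝒮.smul y ι)) =
            𝒮.inn x (T x) + 𝒮.inn y (T y) + (𝒮.inn x (T y) - 𝒮.inn y (T x)) * ι := by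
          rw [hTadd x hx _ hyι, Tι y hy, 𝒮.inn_add_left', 𝒮.inn_add_right, 𝒮.inn_add_right,
            𝒮.inn_smul_right x (T y) ι,
            𝒮.inn_smul_left' y (T x) ι, 𝒮.inn_smul_left' y (𝒮.smul (T y) ι) ι,
            𝒮.inn_smul_right y (T y) ι, sι, qy.1, hG,
            show (-ι) * ((((a2:ℝ):ℍ) + ((b2:ℝ):ℍ)*ι)) = -(((((a2:ℝ):ℍ) + ((b2:ℝ):ℍ)*ι)) * ι) by
              rw [neg_mul, slice_commι],
            hcoeιι ((𝒮.inn y (T y)).re), sub_mul]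
          abel
        have hFmG : (𝒮.inn x (T y) - 𝒮.inn y (T x)) * ι =
            ((((𝒮.inn (x + 𝒮.smul y ι) (T (x + 𝒮.smul y ι))).re - (𝒮.inn x (T x)).re
              - (𝒮.inn y (T y)).re : ℝ)):ℍ) := by
          push_cast
          rw [← q2.1, ← qx.1, ← qy.1, e2]
          abel
        have c1 := slice_inj (a1 + a2) (b1 + b2)
            ((𝒮.inn (x+y) (T (x+y))).re - (𝒮.inn x (T x)).re - (𝒮.inn y (T y)).re) 0 (by
          calc (((a1+a2 :ℝ)):ℍ) + (((b1+b2 :ℝ)):ℍ)*ι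
              = (((a1:ℝ):ℍ) + ((b1:ℝ):ℍ)*ι) + (((a2:ℝ):ℍ) + ((b2:ℝ):ℍ)*ι) := by
                push_cast; noncomm_ring
            _ = 𝒮.inn x (T y) + 𝒮.inn y (T x) := by rw [hF, hG]
            _ = _ := by rw [hFG]; push_cast; noncomm_ring)
        have c2 := slice_inj (-(b1 - b2)) (a1 - a2)
            ((𝒮.inn (x + 𝒮.smul y ι) (T (x + 𝒮.smul y ι))).re - (𝒮.inn x (T x)).re
              - (𝒮.inn y (T y)).re) 0 (by
          calc (((-(b1 - b2) :ℝ)):ℍ) + (((a1 - a2 :ℝ)):ℍ)*ι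
              = ((((a1 - a2 :ℝ)):ℍ) + (((b1 - b2 :ℝ)):ℍ)*ι)*ι := (sliceMulι _ _).symm
            _ = (𝒮.inn x (T y) - 𝒮.inn y (T x))*ι := by
                rw [show ((((a1 - a2 :ℝ)):ℍ) + (((b1 - b2 :ℝ)):ℍ)*ι)
                    = 𝒮.inn x (T y) - 𝒮.inn y (T x) by
                  rw [hF, hG]; push_cast; noncomm_ring]
            _ = _ := by rw [hFmG]; push_cast; noncomm_ring)
        rw [hG, hF, starSlice a1 b1, show a2 = a1 by linarith [c2.2],
          show b2 = -b1 by linarith [c1.2]]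
      -- conclusion
      intro u
      obtain ⟨ax, bx, hx⟩ := innCpm (P u) (T (N u)) (hPmem u) (hTmaps _ (hNmem u))
      have hstar : 𝒮.inn (N u) (T (P u)) = star (𝒮.inn (P u) (T (N u))) :=
        hsa (P u) (hPmem u) (N u) (hNmem u)
      have qP := hTpos (P u) (hPmem u)
      have qN := hTpos (N u) (hNmem u)
      have hudec : u = P u + 𝒮.smul (N u) (-j) := by
        rw [← hMN u]; exact (hPM u).symm
      have E : 𝒮.inn u (Te u) =
          ((((𝒮.inn (P u) (T (P u))).re + (𝒮.inn (N u) (T (N u))).re : ℝ)):ℍ) := by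
        calc 𝒮.inn u (Te u)
            = 𝒮.inn (P u + 𝒮.smul (N u) (-j)) (T (P u) - 𝒮.smul (T (N u)) j) := by
              rw [Teexp u, ← hudec]
          _ = 𝒮.inn (P u) (T (P u)) - 𝒮.inn (P u) (T (N u)) * j
              + star (-j) * (𝒮.inn (N u) (T (P u)) - 𝒮.inn (N u) (T (N u)) * j) := by
              rw [𝒮.inn_add_left',
                𝒮.inn_smul_left' (N u) (T (P u) - 𝒮.smul (T (N u)) j) (-j),
                𝒮.inn_sub_right, 𝒮.inn_sub_right,
                𝒮.inn_smul_right (P u) (T (N u)) j, 𝒮.inn_smul_right (N u) (T (N u)) j]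
          _ = _ := by
              rw [star_neg, sj, neg_neg, hstar, hx, qP.1, qN.1, mul_sub,
                hjstar ax bx, hjcoej ((𝒮.inn (N u) (T (N u))).re)]
              push_cast
              abel
      constructor
      · rw [E, Quaternion.re_coe]
      · rw [E, Quaternion.re_coe]
        have h1 := qP.2
        have h2 := qN.2
        linarith
end

section
/- Let H be a quaternionic Hilbert space, J ∈ B(H) anti self-adjoint and unitary, and ι an imaginary unit. As a ℂ_ι-complex vector space, H decomposes as the direct sum H = H₊^{Jι} ⊕ H₋^{Jι}, where H₊^{Jι} = {u : Ju = uι} and H₋^{Jι} = {u : Ju = -uι}; explicitly, every u ∈ H equals u₊ + u₋ with u₊ := ½(u - Juι) ∈ H₊^{Jι} and u₋ := ½(u + Juι) ∈ H₋^{Jι}. Moreover, for any imaginary unit j with ιj = -jι, the map u ↦ uj is an isometric ℂ_ι-anti-linear isomorphism from H₊^{Jι} onto H₋^{Jι}. -/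
section AuxDecomp

lemma quat_re_of_sq_neg_one {q : ℍ} (h : q ^ 2 = -1) : q.re = 0 := by
  have h' : q * q = -1 := by rw [← sq]; exact h
  have h1 := congrArg QuaternionAlgebra.re h'
  have h2 := congrArg QuaternionAlgebra.imI h'
  have h3 := congrArg QuaternionAlgebra.imJ h'
  have h4 := congrArg QuaternionAlgebra.imK h'
  simp [Quaternion.re_mul, Quaternion.imI_mul, Quaternion.imJ_mul,
    Quaternion.imK_mul, Quaternion.re_one, Quaternion.imI_one, Quaternion.imJ_one,
    Quaternion.imK_one] at h1 h2 h3 h4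
  nlinarith [sq_nonneg q.re, sq_nonneg q.imI, sq_nonneg q.imJ, sq_nonneg q.imK]

lemma quat_star_of_sq_neg_one {q : ℍ} (h : q ^ 2 = -1) : star q = -q := by
  have := quat_re_of_sq_neg_one h
  ext <;> simp [this]

variable {H : Type} [NormedAddCommGroup H] (𝒮 : QHS H)

lemma aux_smul_zero (u : H) : 𝒮.smul u 0 = 0 := by
  have h := 𝒮.smul_add' u 0 0
  rw [add_zero] at h
  exact (left_eq_add.mp h)

lemma aux_zero_smul (q : ℍ) : 𝒮.smul 0 q = 0 := by
  have h := 𝒮.add_smul' 0 0 q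
  rw [add_zero] at h
  exact (left_eq_add.mp h)

lemma aux_smul_neg (u : H) (q : ℍ) : 𝒮.smul u (-q) = -𝒮.smul u q := by
  have h := 𝒮.smul_add' u q (-q)
  rw [add_neg_cancel, aux_smul_zero] at h
  exact eq_neg_of_add_eq_zero_right h.symm

lemma aux_neg_smul (u : H) (q : ℍ) : 𝒮.smul (-u) q = -𝒮.smul u q := by
  have h := 𝒮.add_smul' u (-u) q
  rw [add_neg_cancel, aux_zero_smul] at h
  exact eq_neg_of_add_eq_zero_right h.symm

lemma aux_smul_sub (u v : H) (q : ℍ) :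
    𝒮.smul (u - v) q = 𝒮.smul u q - 𝒮.smul v q := by
  rw [sub_eq_add_neg, 𝒮.add_smul', aux_neg_smul, sub_eq_add_neg]

lemma aux_smul_neg_one (u : H) : 𝒮.smul u (-1) = -u := by
  rw [aux_smul_neg, 𝒮.smul_one']

lemma aux_inn_smul_left (u v : H) (q : ℍ) :
    𝒮.inn (𝒮.smul u q) v = star q * 𝒮.inn u v := by
  rw [𝒮.inn_conj, 𝒮.inn_smul_right, star_mul, ← 𝒮.inn_conj]

lemma aux_eq_zero_of_inn_self (u : H) (h : 𝒮.inn u u = 0) : u = 0 := by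
  have h2 := 𝒮.norm_sq' u
  rw [h] at h2
  simp only [Quaternion.re_zero] at h2
  have := pow_eq_zero_iff (n := 2) (by norm_num) |>.mp h2
  simpa using this

end AuxDecomp

/-- **decomposition `H = H₊^{Jι} ⊕ H₋^{Jι}`.**
For `J` anti self-adjoint and unitary and `ι` an imaginary unit, every `u ∈ H`
decomposes as `u = u₊ + u₋` with `u₊ = ½(u - J u ι) ∈ H₊^{Jι}` and
`u₋ = ½(u + J u ι) ∈ H₋^{Jι}`, the decomposition being direct; moreover, for any
imaginary unit `j` anticommuting with `ι`, the map `u ↦ u j` is an isometric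
`ℂ_ι`-anti-linear (additive) bijection from `H₊^{Jι}` onto `H₋^{Jι}`. -/
theorem complex_subspace_decomposition
    {H : Type} [NormedAddCommGroup H] [CompleteSpace H] (𝒮 : QHS H)
    (J : H → H) (hJlin : 𝒮.RightLinear J) (hJbdd : BoundedOp J)
    (hJanti : 𝒮.AntiSelfAdjointOp J) (hJuni : 𝒮.UnitaryOp J)
    (ι j : ℍ) (hι : ι ^ 2 = -1) (hj : j ^ 2 = -1) (hanti : ι * j = -(j * ι)) :
    (∀ u : H,
      𝒮.smul (u - 𝒮.smul (J u) ι) ((((2 : ℝ)⁻¹ : ℝ)) : ℍ) ∈ 𝒮.Hplus J ι ∧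
      𝒮.smul (u + 𝒮.smul (J u) ι) ((((2 : ℝ)⁻¹ : ℝ)) : ℍ) ∈ 𝒮.Hminus J ι ∧
      u = 𝒮.smul (u - 𝒮.smul (J u) ι) ((((2 : ℝ)⁻¹ : ℝ)) : ℍ)
          + 𝒮.smul (u + 𝒮.smul (J u) ι) ((((2 : ℝ)⁻¹ : ℝ)) : ℍ)) ∧
    -- directness of the sum
    (∀ a ∈ 𝒮.Hplus J ι, ∀ b ∈ 𝒮.Hminus J ι, a + b = 0 → a = 0 ∧ b = 0) ∧
    -- u ↦ u j is an isometric ℂ_ι-anti-linear isomorphism H₊ → H₋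
    Set.BijOn (fun u => 𝒮.smul u j) (𝒮.Hplus J ι) (𝒮.Hminus J ι) ∧
    (∀ u ∈ 𝒮.Hplus J ι, ‖𝒮.smul u j‖ = ‖u‖) ∧
    (∀ u ∈ 𝒮.Hplus J ι, ∀ v ∈ 𝒮.Hplus J ι, 𝒮.smul (u + v) j = 𝒮.smul u j + 𝒮.smul v j) ∧
    (∀ u ∈ 𝒮.Hplus J ι, ∀ c ∈ Cslice ι,
      𝒮.smul (𝒮.smul u c) j = 𝒮.smul (𝒮.smul u j) (star c)) := by
  obtain ⟨Jadd, Jsm⟩ := hJlin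
  have hιι : ι * ι = -1 := by rw [← sq]; exact hι
  have hjj : j * j = -1 := by rw [← sq]; exact hj
  have hJ0 : J 0 = 0 := by
    have h := Jadd 0 0
    rw [add_zero] at h
    exact (left_eq_add.mp h)
  have hJneg : ∀ u : H, J (-u) = -J u := by
    intro u
    have h := Jadd u (-u)
    rw [add_neg_cancel, hJ0] at h
    exact eq_neg_of_add_eq_zero_right h.symm
  have hJsub : ∀ u v : H, J (u - v) = J u - J v := by
    intro u v
    rw [sub_eq_add_neg, Jadd, hJneg, sub_eq_add_neg]
  -- J ∘ J = -1
  have hJJ : ∀ u : H, J (J u) = -u := by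
    intro v
    have key : ∀ u : H, 𝒮.inn u (J (J v) + v) = 0 := by
      intro u
      rw [𝒮.inn_add_right]
      have h := hJanti u (J v)
      rw [hJuni.2.2 u v] at h
      have h1 : 𝒮.inn u (J (J v)) = -𝒮.inn u v := neg_eq_iff_eq_neg.mp h.symm
      rw [h1]
      exact neg_add_cancel _
    have h0 := aux_eq_zero_of_inn_self 𝒮 _ (key (J (J v) + v))
    exact eq_neg_of_add_eq_zero_left h0
  -- the common half-scalar
  set c : ℍ := (((2 : ℝ)⁻¹ : ℝ) : ℍ) with hc
  have hcomm : ∀ q : ℍ, c * q = q * c := fun q => Quaternion.coe_commutes _ q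
  have hsmul_comm : ∀ (u : H) (q : ℍ), 𝒮.smul (𝒮.smul u c) q = 𝒮.smul (𝒮.smul u q) c := by
    intro u q
    rw [← 𝒮.smul_mul', ← 𝒮.smul_mul', hcomm]
  refine ⟨?_, ?_, ⟨?_, ?_, ?_⟩, ?_, ?_, ?_⟩
  · -- decomposition
    intro u
    refine ⟨?_, ?_, ?_⟩
    · show J _ = _
      rw [Jsm, hJsub, Jsm, hJJ, aux_neg_smul, sub_neg_eq_add, hsmul_comm,
        aux_smul_sub, ← 𝒮.smul_mul', hιι, aux_smul_neg_one, sub_neg_eq_add, add_comm]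
    · show J _ = _
      have e1 : J (u + 𝒮.smul (J u) ι) = J u - 𝒮.smul u ι := by
        rw [Jadd, Jsm, hJJ, aux_neg_smul, ← sub_eq_add_neg]
      have e2 : 𝒮.smul (u + 𝒮.smul (J u) ι) ι = 𝒮.smul u ι - J u := by
        rw [𝒮.add_smul', ← 𝒮.smul_mul', hιι, aux_smul_neg_one, ← sub_eq_add_neg]
      rw [Jsm, e1, hsmul_comm, e2, ← aux_neg_smul 𝒮 (𝒮.smul u ι - J u) c]
      congr 1
      abel
    · rw [← 𝒮.add_smul']
      have : u - 𝒮.smul (J u) ι + (u + 𝒮.smul (J u) ι) = u + u := by abel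
      rw [this, 𝒮.add_smul', ← 𝒮.smul_add']
      have h1 : c + c = 1 := by
        rw [hc, ← Quaternion.coe_add]
        norm_num
      rw [h1, 𝒮.smul_one']
  · -- directness
    intro a ha b hb hab
    have h1 : 𝒮.smul (a - b) ι = 0 := by
      have h := Jadd a b
      rw [hab, hJ0, ha, hb, ← sub_eq_add_neg, ← aux_smul_sub] at h
      exact h.symm
    have h2 : a - b = 0 := by
      have h := congrArg (fun w => 𝒮.smul w ι) h1
      simp only [aux_zero_smul] at h
      rw [← 𝒮.smul_mul', hιι, aux_smul_neg_one, neg_eq_zero] at h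
      exact h
    have hba : a = b := sub_eq_zero.mp h2
    have haa : a + a = 0 := by rw [hba] at hab ⊢; exact hab
    have hhalf : c + c = 1 := by
      rw [hc, ← Quaternion.coe_add]; norm_num
    have ha0 : a = 0 := by
      have h5 : 𝒮.smul (a + a) c = a := by
        rw [𝒮.add_smul', ← 𝒮.smul_add', hhalf, 𝒮.smul_one']
      rw [haa, aux_zero_smul] at h5
      exact h5.symm
    exact ⟨ha0, hba ▸ ha0⟩
  · -- MapsTo
    intro u hu
    show J _ = _
    rw [Jsm, hu, ← 𝒮.smul_mul', hanti, ← 𝒮.smul_mul', ← aux_smul_neg]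
  · -- InjOn
    intro u _ v _ huv
    have h := congrArg (fun w => 𝒮.smul w j) huv
    simp only [← 𝒮.smul_mul', hjj, aux_smul_neg_one] at h
    exact neg_injective h
  · -- SurjOn
    intro v hv
    refine ⟨𝒮.smul v (-j), ?_, ?_⟩
    · show J _ = _
      rw [Jsm, hv, aux_neg_smul, ← 𝒮.smul_mul', ← 𝒮.smul_mul', ← aux_smul_neg]
      congr 1
      rw [mul_neg, neg_neg, hanti, neg_mul]
    · show 𝒮.smul (𝒮.smul v (-j)) j = v
      rw [← 𝒮.smul_mul', neg_mul, hjj, neg_neg, 𝒮.smul_one']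
  · -- isometry
    intro u _
    have hstar : star j = -j := quat_star_of_sq_neg_one hj
    have hinn : 𝒮.inn (𝒮.smul u j) (𝒮.smul u j) = 𝒮.inn u u := by
      rw [aux_inn_smul_left, 𝒮.inn_smul_right, hstar, 𝒮.inn_self_real u]
      rw [Quaternion.coe_commutes, neg_mul, ← mul_assoc, hjj]
      simp
    have h1 := 𝒮.norm_sq' (𝒮.smul u j)
    have h2 := 𝒮.norm_sq' u
    rw [hinn, ← h2] at h1
    have := congrArg Real.sqrt h1
    rwa [Real.sqrt_sq (norm_nonneg _), Real.sqrt_sq (norm_nonneg _)] at this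
  · -- additivity
    intro u _ v _
    exact 𝒮.add_smul' u v j
  · -- anti-linearity
    intro u _ d hd
    obtain ⟨a, b, rfl⟩ := hd
    rw [← 𝒮.smul_mul', ← 𝒮.smul_mul']
    congr 1
    rw [star_add, star_mul, Quaternion.star_coe, quat_star_of_sq_neg_one hι]
    rw [add_mul, mul_add]
    congr 1
    · exact Quaternion.coe_commutes a j
    · rw [Quaternion.star_coe, ← Quaternion.coe_commutes b ι, mul_assoc, hanti,
        mul_neg, mul_neg, mul_neg]
      congr 1
      rw [← mul_assoc, ← mul_assoc, Quaternion.coe_commutes]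
end
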